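/- Let G = (V,E) be a finite cavity-monotone network. Then for every t > 1, the energy satisfies U(G;t) ≥ M(G) − (1/log t)·(|E| log 2 + Σ_{i∈V} log A(μ_i)), where for a local measure μ, A(μ) = max μ / min μ with max μ = max{μ(F) : μ(F) > 0} and min μ = min{μ(F) : μ(F) > 0}, and M(G) = max{|F| : F ⊆ E, μ(F) > 0}. -/

import Mathlib

open Finset Filter
open scoped Classical ENNReal

section LocalDefs

variable {V : Type*} [DecidableEq V]

/-- Generating polynomial `Z(w) = Σ_{S ⊆ A} ν(S) ∏_{k∈S} w_k` of a measure `ν`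
on the subsets of the ground set `A`. -/
noncomputable def lZ (A : Finset V) (ν : Finset V → ℝ) (w : V → ℝ) : ℝ :=
  ∑ S ∈ A.powerset, ν S * ∏ k ∈ S, w k

/-- Gibbs--Boltzmann probability of the event `p` under external field `w`. -/
noncomputable def lProb (A : Finset V) (ν : Finset V → ℝ) (w : V → ℝ)
    (p : Finset V → Prop) : ℝ :=
  (∑ S ∈ A.powerset.filter p, ν S * ∏ k ∈ S, w k) / lZ A ν w

/-- The energy `U_ν(w)`, i.e. the expected cardinality of the random subset. -/
noncomputable def lEnergy (A : Finset V) (ν : Finset V → ℝ) (w : V → ℝ) : ℝ :=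
  (∑ S ∈ A.powerset, (S.card : ℝ) * ν S * ∏ k ∈ S, w k) / lZ A ν w

/-- `E^w_ν[|𝓕|·1_{e∈𝓕}]`. -/
noncomputable def lEnergyIn (A : Finset V) (ν : Finset V → ℝ) (e : V) (w : V → ℝ) : ℝ :=
  (∑ S ∈ A.powerset.filter (fun S => e ∈ S), (S.card : ℝ) * ν S * ∏ k ∈ S, w k) / lZ A ν w

/-- The cavity ratio `Γ^e_ν(w') = Z^{/e}(w') / Z^{∖e}(w')`; it only depends on the
coordinates of `w` different from `e`. -/
noncomputable def lGamma (A : Finset V) (ν : Finset V → ℝ) (e : V) (w : V → ℝ) : ℝ :=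
  (∑ S ∈ (A.erase e).powerset, ν (insert e S) * ∏ k ∈ S, w k) /
  (∑ S ∈ (A.erase e).powerset, ν S * ∏ k ∈ S, w k)

/-- Rayleigh property: pairwise negative correlation under every positive external field. -/
def lRayleigh (A : Finset V) (ν : Finset V → ℝ) : Prop :=
  ∀ w : V → ℝ, (∀ k ∈ A, 0 < w k) → ∀ e ∈ A, ∀ f ∈ A, e ≠ f →
    lProb A ν w (fun S => e ∈ S ∧ f ∈ S) ≤
      lProb A ν w (fun S => e ∈ S) * lProb A ν w (fun S => f ∈ S)

/-- Size-increasing property: every ground element positively influences the total size. -/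
def lSizeInc (A : Finset V) (ν : Finset V → ℝ) : Prop :=
  ∀ w : V → ℝ, (∀ k ∈ A, 0 < w k) → ∀ e ∈ A,
    lEnergy A ν w * lProb A ν w (fun S => e ∈ S) < lEnergyIn A ν e w

/-- Cavity-monotone: nonnegative, `ν(∅) > 0`, Rayleigh and size-increasing. -/
def lCavityMonotone (A : Finset V) (ν : Finset V → ℝ) : Prop :=
  (∀ S ∈ A.powerset, 0 ≤ ν S) ∧ 0 < ν ∅ ∧ lRayleigh A ν ∧ lSizeInc A ν

end LocalDefs

section NetworkDefs

variable {V : Type*} [DecidableEq V]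

/-- The cavity operator: `(Γ_G x)_{i→j}` is the cavity ratio of the local measure `μ i`
at the edge `ij`, with external field `(x_{k→i} : k ∈ ∂i ∖ {j})`.  Local measures are
encoded as functions of the set of neighbours selected. -/
noncomputable def cavOp (G : SimpleGraph V) [G.LocallyFinite]
    (μ : V → Finset V → ℝ) (x : V → V → ℝ) (i j : V) : ℝ :=
  (∑ S ∈ ((G.neighborFinset i).erase j).powerset, μ i (insert j S) * ∏ k ∈ S, x k i) /
  (∑ S ∈ ((G.neighborFinset i).erase j).powerset, μ i S * ∏ k ∈ S, x k i)

/-- One step of the cavity iteration at activity `t` : `x ↦ t Γ_G(x)`. -/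
noncomputable def cavStep (G : SimpleGraph V) [G.LocallyFinite]
    (μ : V → Finset V → ℝ) (t : ℝ) (x : V → V → ℝ) : V → V → ℝ :=
  fun i j => t * cavOp G μ x i j

/-- The neighbours `k` of `i` such that the edge `ik` belongs to the spanning subgraph `F`;
this encodes `F ∩ E_i` as a set of neighbours. -/
noncomputable def nbrsIn (G : SimpleGraph V) [G.LocallyFinite]
    (F : Finset (Sym2 V)) (i : V) : Finset V :=
  (G.neighborFinset i).filter (fun k => s(i, k) ∈ F)

variable [Fintype V]

/-- Global measure `μ(F) = ∏_i μ_i(F ∩ E_i)` of a spanning subgraph `F`. -/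
noncomputable def gWeight (G : SimpleGraph V) [DecidableRel G.Adj]
    (μ : V → Finset V → ℝ) (F : Finset (Sym2 V)) : ℝ :=
  ∏ i : V, μ i (nbrsIn G F i)

/-- Partition function `Z(G;t) = Σ_{F ⊆ E} μ(F) t^{|F|}`. -/
noncomputable def ZG (G : SimpleGraph V) [DecidableRel G.Adj]
    (μ : V → Finset V → ℝ) (t : ℝ) : ℝ :=
  ∑ F ∈ G.edgeFinset.powerset, gWeight G μ F * t ^ F.card

/-- Gibbs--Boltzmann probability of the event `p` at activity `t`. -/
noncomputable def gProb (G : SimpleGraph V) [DecidableRel G.Adj]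
    (μ : V → Finset V → ℝ) (t : ℝ) (p : Finset (Sym2 V) → Prop) : ℝ :=
  (∑ F ∈ G.edgeFinset.powerset.filter p, gWeight G μ F * t ^ F.card) / ZG G μ t

/-- Energy `U(G;t)`, the expected size of the random spanning subgraph. -/
noncomputable def UG (G : SimpleGraph V) [DecidableRel G.Adj]
    (μ : V → Finset V → ℝ) (t : ℝ) : ℝ :=
  (∑ F ∈ G.edgeFinset.powerset, (F.card : ℝ) * gWeight G μ F * t ^ F.card) / ZG G μ t

/-- `M(G)`, the maximum size of a spanning subgraph with positive weight. -/
noncomputable def MG (G : SimpleGraph V) [DecidableRel G.Adj]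
    (μ : V → Finset V → ℝ) : ℕ :=
  (G.edgeFinset.powerset.filter (fun F => 0 < gWeight G μ F)).sup Finset.card

end NetworkDefs

/-- `A(ν) = max ν / min ν`, the ratio of the largest to the smallest positive value of
the local measure `ν` on subsets of the ground set `A`. -/
noncomputable def AM {V : Type*} [DecidableEq V] (A : Finset V) (ν : Finset V → ℝ) : ℝ :=
  sSup (ν '' {S : Finset V | S ⊆ A ∧ 0 < ν S}) /
    sInf (ν '' {S : Finset V | S ⊆ A ∧ 0 < ν S})

/-- on a finite cavity-monotone network, for every `t > 1`,
`U(G;t) ≥ M(G) − (1/log t)(|E| log 2 + Σ_i log A(μ_i))`. -/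
theorem stmt15 {V : Type*} [Fintype V] [DecidableEq V] (G : SimpleGraph V)
    [DecidableRel G.Adj] (μ : V → Finset V → ℝ)
    (hcm : ∀ i : V, lCavityMonotone (G.neighborFinset i) (μ i))
    (t : ℝ) (ht : 1 < t) :
    (MG G μ : ℝ) -
        (1 / Real.log t) * ((G.edgeFinset.card : ℝ) * Real.log 2 +
          ∑ i : V, Real.log (AM (G.neighborFinset i) (μ i))) ≤
      UG G μ t := by
  classical
  have htpos : (0:ℝ) < t := lt_trans one_pos ht
  have hlt : 0 < Real.log t := Real.log_pos ht
  have hlne : Real.log t ≠ 0 := hlt.ne'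
  set C := (G.edgeFinset.card : ℝ) * Real.log 2 +
      ∑ i : V, Real.log (AM (G.neighborFinset i) (μ i)) with hC
  -- basic facts about local measures
  have hμnn : ∀ (i : V) (S : Finset V), S ⊆ G.neighborFinset i → 0 ≤ μ i S := by
    intro i S hS
    exact (hcm i).1 S (Finset.mem_powerset.mpr hS)
  have hμ0 : ∀ i : V, 0 < μ i ∅ := fun i => (hcm i).2.1
  have hnbrs : ∀ (F : Finset (Sym2 V)) (i : V), nbrsIn G F i ⊆ G.neighborFinset i :=
    fun F i => Finset.filter_subset _ _
  have hwnn : ∀ F : Finset (Sym2 V), 0 ≤ gWeight G μ F :=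
    fun F => Finset.prod_nonneg fun i _ => hμnn i _ (hnbrs F i)
  have hnbrs0 : ∀ i : V, nbrsIn G (∅ : Finset (Sym2 V)) i = ∅ := by
    intro i; simp [nbrsIn]
  have hw0 : 0 < gWeight G μ (∅ : Finset (Sym2 V)) := by
    rw [gWeight]
    exact Finset.prod_pos fun i _ => by rw [hnbrs0 i]; exact hμ0 i
  have hemptyP : (∅ : Finset (Sym2 V)) ∈ G.edgeFinset.powerset :=
    Finset.mem_powerset.mpr (Finset.empty_subset _)
  -- positive weight means all factors positive
  have hfac : ∀ F : Finset (Sym2 V), 0 < gWeight G μ F → ∀ i : V, 0 < μ i (nbrsIn G F i) := by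
    intro F hF i
    have hne : (∏ j : V, μ j (nbrsIn G F j)) ≠ 0 := by
      rw [gWeight] at hF; exact hF.ne'
    have := Finset.prod_ne_zero_iff.mp hne i (Finset.mem_univ i)
    exact lt_of_le_of_ne (hμnn i _ (hnbrs F i)) (Ne.symm this)
  -- the sets of positive values of local measures
  set Sset : V → Set ℝ :=
    fun i => μ i '' {S : Finset V | S ⊆ G.neighborFinset i ∧ 0 < μ i S} with hSset
  have hfin : ∀ i : V, (Sset i).Finite := by
    intro i
    apply Set.Finite.image
    apply Set.Finite.subset (G.neighborFinset i).powerset.finite_toSet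
    intro S hS
    simpa [Finset.mem_powerset, ← Finset.coe_subset] using hS.1
  have hne : ∀ i : V, (Sset i).Nonempty :=
    fun i => ⟨μ i ∅, ⟨∅, ⟨Finset.empty_subset _, hμ0 i⟩, rfl⟩⟩
  have hposmem : ∀ i : V, ∀ x ∈ Sset i, 0 < x := by
    rintro i x ⟨S, hS, rfl⟩; exact hS.2
  set a : V → ℝ := fun i => sSup (Sset i) with ha
  set b : V → ℝ := fun i => sInf (Sset i) with hb
  have hapos : ∀ i : V, 0 < a i := fun i => hposmem i _ ((hne i).csSup_mem (hfin i))
  have hbpos : ∀ i : V, 0 < b i := fun i => hposmem i _ ((hne i).csInf_mem (hfin i))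
  have hle_a : ∀ (i : V) (S : Finset V), S ⊆ G.neighborFinset i → 0 < μ i S → μ i S ≤ a i :=
    fun i S h1 h2 => le_csSup (hfin i).bddAbove ⟨S, ⟨h1, h2⟩, rfl⟩
  have hb_le : ∀ (i : V) (S : Finset V), S ⊆ G.neighborFinset i → 0 < μ i S → b i ≤ μ i S :=
    fun i S h1 h2 => csInf_le (hfin i).bddBelow ⟨S, ⟨h1, h2⟩, rfl⟩
  have hAM : ∀ i : V, AM (G.neighborFinset i) (μ i) = a i / b i := fun i => rfl
  -- weight bounds
  have hwle : ∀ F : Finset (Sym2 V), gWeight G μ F ≤ ∏ i : V, a i := by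
    intro F
    rcases lt_or_eq_of_le (hwnn F) with h | h
    · rw [gWeight]
      exact Finset.prod_le_prod (fun i _ => (hfac F h i).le)
        (fun i _ => hle_a i _ (hnbrs F i) (hfac F h i))
    · rw [← h]; exact Finset.prod_nonneg fun i _ => (hapos i).le
  have hwge : ∀ F : Finset (Sym2 V), 0 < gWeight G μ F → ∏ i : V, b i ≤ gWeight G μ F := by
    intro F hF
    rw [gWeight]
    exact Finset.prod_le_prod (fun i _ => (hbpos i).le)
      (fun i _ => hb_le i _ (hnbrs F i) (hfac F hF i))
  -- a maximiser of positive weight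
  have hQne : (G.edgeFinset.powerset.filter (fun F => 0 < gWeight G μ F)).Nonempty :=
    ⟨∅, Finset.mem_filter.mpr ⟨hemptyP, hw0⟩⟩
  obtain ⟨Fm, hFmQ, hMcard⟩ := Finset.exists_mem_eq_sup _ hQne Finset.card
  have hFmP : Fm ∈ G.edgeFinset.powerset := (Finset.mem_filter.mp hFmQ).1
  have hFmpos : 0 < gWeight G μ Fm := (Finset.mem_filter.mp hFmQ).2
  have hMG : MG G μ = Fm.card := by rw [MG]; exact hMcard
  -- partition functions
  set Z : ℝ := ZG G μ t with hZdef
  have hZ : Z = ∑ F ∈ G.edgeFinset.powerset, gWeight G μ F * t ^ F.card := rfl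
  set N : ℝ := ∑ F ∈ G.edgeFinset.powerset, (F.card : ℝ) * gWeight G μ F * t ^ F.card with hNdef
  have hUG : UG G μ t = N / Z := rfl
  have hZpos : 0 < Z := by
    rw [hZ]
    refine Finset.sum_pos' (fun F _ => mul_nonneg (hwnn F) (pow_nonneg htpos.le _)) ?_
    exact ⟨∅, hemptyP, by simpa using hw0⟩
  set Z1 : ℝ := ∑ F ∈ G.edgeFinset.powerset, gWeight G μ F with hZ1def
  have hZ1pos : 0 < Z1 := Finset.sum_pos' (fun F _ => hwnn F) ⟨∅, hemptyP, hw0⟩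
  have hZ1le : Z1 ≤ 2 ^ G.edgeFinset.card * ∏ i : V, a i := by
    calc Z1 ≤ ∑ _F ∈ G.edgeFinset.powerset, ∏ i : V, a i :=
          Finset.sum_le_sum (fun F _ => hwle F)
      _ = (G.edgeFinset.powerset.card : ℝ) * ∏ i : V, a i := by
          rw [Finset.sum_const, nsmul_eq_mul]
      _ = 2 ^ G.edgeFinset.card * ∏ i : V, a i := by
          rw [Finset.card_powerset]; push_cast; ring
  -- Jensen's inequality for exp
  have hpow : ∀ n : ℕ, t ^ n = Real.exp ((n : ℝ) * Real.log t) := by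
    intro n; rw [Real.exp_nat_mul, Real.exp_log htpos]
  have hsum1 : ∑ F ∈ G.edgeFinset.powerset, gWeight G μ F * t ^ F.card / Z = 1 := by
    rw [← Finset.sum_div, ← hZ, div_self hZpos.ne']
  have hjensen := convexOn_exp.map_sum_le
    (t := G.edgeFinset.powerset)
    (w := fun F => gWeight G μ F * t ^ F.card / Z)
    (p := fun F => ((Fm.card : ℝ) - F.card) * Real.log t)
    (fun F _ => div_nonneg (mul_nonneg (hwnn F) (pow_nonneg htpos.le _)) hZpos.le)
    hsum1 (fun F _ => Set.mem_univ _)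
  simp only [smul_eq_mul] at hjensen
  have hx : ∑ F ∈ G.edgeFinset.powerset,
      gWeight G μ F * t ^ F.card / Z * (((Fm.card : ℝ) - F.card) * Real.log t)
      = ((Fm.card : ℝ) - N / Z) * Real.log t := by
    have h1 : ∀ F ∈ G.edgeFinset.powerset,
        gWeight G μ F * t ^ F.card / Z * (((Fm.card : ℝ) - F.card) * Real.log t)
        = Real.log t / Z * ((Fm.card : ℝ) * (gWeight G μ F * t ^ F.card)
            - (F.card : ℝ) * gWeight G μ F * t ^ F.card) := by
      intro F _; ring
    rw [Finset.sum_congr rfl h1, ← Finset.mul_sum, Finset.sum_sub_distrib, ← Finset.mul_sum,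
      ← hZ, ← hNdef]
    field_simp
  have hy : ∑ F ∈ G.edgeFinset.powerset,
      gWeight G μ F * t ^ F.card / Z * Real.exp (((Fm.card : ℝ) - F.card) * Real.log t)
      = Real.exp ((Fm.card : ℝ) * Real.log t) * Z1 / Z := by
    have h1 : ∀ F ∈ G.edgeFinset.powerset,
        gWeight G μ F * t ^ F.card / Z * Real.exp (((Fm.card : ℝ) - F.card) * Real.log t)
        = Real.exp ((Fm.card : ℝ) * Real.log t) * gWeight G μ F / Z := by
      intro F _
      rw [hpow F.card]
      rw [show gWeight G μ F * Real.exp ((F.card : ℝ) * Real.log t) / Z *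
            Real.exp (((Fm.card : ℝ) - F.card) * Real.log t)
          = gWeight G μ F / Z * (Real.exp ((F.card : ℝ) * Real.log t) *
            Real.exp (((Fm.card : ℝ) - F.card) * Real.log t)) from by ring]
      rw [← Real.exp_add, show (F.card : ℝ) * Real.log t
          + ((Fm.card : ℝ) - F.card) * Real.log t = (Fm.card : ℝ) * Real.log t from by ring]
      ring
    rw [Finset.sum_congr rfl h1, hZ1def, Finset.mul_sum, Finset.sum_div]
  rw [hx, hy] at hjensen
  -- take logarithms
  have hRHSpos : 0 < Real.exp ((Fm.card : ℝ) * Real.log t) * Z1 / Z :=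
    div_pos (mul_pos (Real.exp_pos _) hZ1pos) hZpos
  have hlog1 : ((Fm.card : ℝ) - N / Z) * Real.log t ≤
      (Fm.card : ℝ) * Real.log t + Real.log Z1 - Real.log Z := by
    have h2 := Real.log_le_log (Real.exp_pos _) hjensen
    rw [Real.log_exp, Real.log_div (mul_pos (Real.exp_pos _) hZ1pos).ne' hZpos.ne',
      Real.log_mul (Real.exp_pos _).ne' hZ1pos.ne', Real.log_exp] at h2
    linarith
  -- lower bound on log Z
  have hZge : gWeight G μ Fm * t ^ Fm.card ≤ Z := by
    rw [hZ]
    exact Finset.single_le_sum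
      (f := fun F => gWeight G μ F * t ^ F.card)
      (fun F _ => mul_nonneg (hwnn F) (pow_nonneg htpos.le _)) hFmP
  have hlogZ : Real.log (gWeight G μ Fm) + (Fm.card : ℝ) * Real.log t ≤ Real.log Z := by
    have := Real.log_le_log (mul_pos hFmpos (pow_pos htpos _)) hZge
    rwa [Real.log_mul hFmpos.ne' (pow_pos htpos _).ne', Real.log_pow] at this
  -- upper bound on log Z1
  have hlogZ1 : Real.log Z1 ≤
      (G.edgeFinset.card : ℝ) * Real.log 2 + ∑ i : V, Real.log (a i) := by
    have h2 := Real.log_le_log hZ1pos hZ1le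
    rwa [Real.log_mul (pow_pos (by norm_num : (0:ℝ) < 2) _).ne'
        (Finset.prod_pos fun i _ => hapos i).ne', Real.log_pow,
      Real.log_prod (fun i _ => (hapos i).ne')] at h2
  -- lower bound on log of the maximiser's weight
  have hlogwm : ∑ i : V, Real.log (b i) ≤ Real.log (gWeight G μ Fm) := by
    have h2 := Real.log_le_log (Finset.prod_pos fun i _ => hbpos i) (hwge Fm hFmpos)
    rwa [Real.log_prod (fun i _ => (hbpos i).ne')] at h2
  -- rewrite C
  have hCeq : C = (G.edgeFinset.card : ℝ) * Real.log 2 +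
      (∑ i : V, Real.log (a i) - ∑ i : V, Real.log (b i)) := by
    rw [hC, ← Finset.sum_sub_distrib]
    congr 1
    exact Finset.sum_congr rfl fun i _ => by
      rw [hAM i, Real.log_div (hapos i).ne' (hbpos i).ne']
  -- combine everything
  have key : (Fm.card : ℝ) * Real.log t - C ≤ UG G μ t * Real.log t := by
    rw [hUG, hCeq]
    have hexp : ((Fm.card : ℝ) - N / Z) * Real.log t
        = (Fm.card : ℝ) * Real.log t - N / Z * Real.log t := by ring
    rw [hexp] at hlog1
    linarith
  rw [hMG, show ((Fm.card : ℝ) - 1 / Real.log t * C)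
      = ((Fm.card : ℝ) * Real.log t - C) / Real.log t from by field_simp,
    div_le_iff₀ hlt]
  exact key
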